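/- arXiv:1907.01983 — 7 statements merged into one kernel-verified Lean document; each statement's English description precedes it below -/
import Mathlib

section
/- The Jacobian of the ODE system G' = G(F(S) − G), S' = φ(−L(G)S + 1) at the grass-free steady state E_S = (0,1) has eigenvalues λ₁ = (1 − e₁)/(1 + p₁) and λ₂ = −φ. Consequently E_S is linearly stable (both eigenvalues negative) if e₁ > 1 and linearly unstable (an eigenvalue positive) if e₁ < 1. -/
open Matrix Polynomial

/-- Eigenvalues of the Jacobian at the grass-free steady state `(0,1)` and its linear
(in)stability. -/
theorem grass_free_state_eigenvalues (e₁ p₁ e₃ φ δ : ℝ)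
    (he₁ : 0 < e₁) (hp₁ : 0 < p₁) (he₃ : 0 < e₃) (hφ : 0 < φ)
    (hδ : 0 < δ) (hδ1 : δ < 1) :
    let F : ℝ → ℝ := fun S => (S - e₁) / (S + p₁)
    let L : ℝ → ℝ := fun G => (δ * G + e₃) / (G + e₃)
    let J : Matrix (Fin 2) (Fin 2) ℝ :=
      !![deriv (fun G => G * (F 1 - G)) 0,
         deriv (fun S => (0 : ℝ) * (F S - 0)) 1;
         deriv (fun G => φ * (-(L G) * 1 + 1)) 0,
         deriv (fun S => φ * (-(L 0) * S + 1)) 1]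
    (J.charpoly.IsRoot ((1 - e₁) / (1 + p₁)) ∧ J.charpoly.IsRoot (-φ)) ∧
    (1 < e₁ → (1 - e₁) / (1 + p₁) < 0 ∧ -φ < 0) ∧
    (e₁ < 1 → 0 < (1 - e₁) / (1 + p₁)) := by
  intro F L J
  have he₃' : e₃ ≠ 0 := ne_of_gt he₃
  have hp : (0:ℝ) < 1 + p₁ := by linarith
  have hL0 : L 0 = 1 := by simp [L, he₃']
  have h00 : deriv (fun G => G * (F 1 - G)) 0 = (1 - e₁) / (1 + p₁) := by
    have h : HasDerivAt (fun G : ℝ => G * (F 1 - G)) (F 1) 0 := by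
      have := (hasDerivAt_id (0:ℝ)).mul ((hasDerivAt_const (0:ℝ) (F 1)).sub (hasDerivAt_id 0))
      simpa [Pi.mul_def, Pi.sub_def] using this
    rw [h.deriv]
  have h01 : deriv (fun S : ℝ => (0 : ℝ) * (F S - 0)) 1 = 0 := by simp
  have h11 : deriv (fun S => φ * (-(L 0) * S + 1)) 1 = -φ := by
    have h : HasDerivAt (fun S : ℝ => φ * (-(L 0) * S + 1)) (φ * (-(L 0) * 1)) 1 :=
      (((hasDerivAt_id (1:ℝ)).const_mul (-(L 0))).add_const 1).const_mul φ
    rw [h.deriv, hL0]; ring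
  have hchar : J.charpoly = (X - C ((1 - e₁) / (1 + p₁))) * (X - C (-φ)) := by
    have c00 : (Matrix.charmatrix J) 0 0 = X - C (J 0 0) := Matrix.charmatrix_apply_eq _ _
    have c11 : (Matrix.charmatrix J) 1 1 = X - C (J 1 1) := Matrix.charmatrix_apply_eq _ _
    have c01 : (Matrix.charmatrix J) 0 1 = -C (J 0 1) := Matrix.charmatrix_apply_ne _ _ _ (by decide)
    have c10 : (Matrix.charmatrix J) 1 0 = -C (J 1 0) := Matrix.charmatrix_apply_ne _ _ _ (by decide)
    rw [Matrix.charpoly, Matrix.det_fin_two, c00, c01, c10, c11]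
    have e00 : J 0 0 = (1 - e₁) / (1 + p₁) := h00
    have e01 : J 0 1 = 0 := h01
    have e11 : J 1 1 = -φ := h11
    rw [e00, e01, e11]
    simp
  refine ⟨⟨?_, ?_⟩, fun h => ⟨div_neg_of_neg_of_pos (by linarith) hp, by linarith⟩,
    fun h => div_pos (by linarith) hp⟩
  · simp [Polynomial.IsRoot, hchar]
  · simp [Polynomial.IsRoot, hchar]
end

section
/- If B + δ < 0, then the value e₁* = K(G̃₊) of K at its positive critical point is strictly greater than 1, and e₁* equals [2e₃A(δ² + Bδ − Ae₃) + (2Ae₃ − Bδ)√(A²e₃² − Ae₃δ(B + δ))]/(δ²√(A²e₃² − Ae₃δ(B + δ))). -/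
set_option maxHeartbeats 800000

/-- The saddle-node bifurcation value `e₁* = K(G̃₊)` exceeds `1` and has the stated
closed form. -/
theorem saddle_node_value (A B δ e₃ : ℝ) (hA : 0 < A) (he₃ : 0 < e₃)
    (hδ : 0 < δ) (hδ1 : δ < 1) (hBδ : B + δ < 0) :
    let K : ℝ → ℝ := fun G => (e₃ - B * G - A * G ^ 2) / (δ * G + e₃)
    let Gp : ℝ := (-e₃ + Real.sqrt (e₃ ^ 2 - e₃ * δ * (B + δ) / A)) / δ
    1 < K Gp ∧
      K Gp = (2 * e₃ * A * (δ ^ 2 + B * δ - A * e₃) +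
        (2 * A * e₃ - B * δ) * Real.sqrt (A ^ 2 * e₃ ^ 2 - A * e₃ * δ * (B + δ))) /
        (δ ^ 2 * Real.sqrt (A ^ 2 * e₃ ^ 2 - A * e₃ * δ * (B + δ))) := by
  intro K Gp
  set s := Real.sqrt (e₃ ^ 2 - e₃ * δ * (B + δ) / A) with hsdef
  have hvneg : e₃ * δ * (B + δ) < 0 := by nlinarith [mul_pos he₃ hδ]
  have hdivneg : e₃ * δ * (B + δ) / A < 0 := div_neg_of_neg_of_pos hvneg hA
  have harg : (0:ℝ) ≤ e₃ ^ 2 - e₃ * δ * (B + δ) / A := by nlinarith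
  have hs2 : s ^ 2 = e₃ ^ 2 - e₃ * δ * (B + δ) / A := Real.sq_sqrt harg
  have hse : e₃ < s := by
    have h1 : e₃ ^ 2 < s ^ 2 := by rw [hs2]; linarith
    nlinarith [Real.sqrt_nonneg (e₃ ^ 2 - e₃ * δ * (B + δ) / A)]
  have hspos : 0 < s := lt_trans he₃ hse
  have hsA : A * s ^ 2 = A * e₃ ^ 2 - e₃ * δ * (B + δ) := by
    rw [hs2]; field_simp
  have hsqrt2 : Real.sqrt (A ^ 2 * e₃ ^ 2 - A * e₃ * δ * (B + δ)) = A * s := by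
    have h : A ^ 2 * e₃ ^ 2 - A * e₃ * δ * (B + δ) = (A * s) ^ 2 := by
      have : (A * s) ^ 2 = A * (A * s ^ 2) := by ring
      rw [this, hsA]; ring
    rw [h, Real.sqrt_sq (by positivity)]
  have hden : δ * Gp + e₃ = s := by
    show δ * ((-e₃ + s) / δ) + e₃ = s
    field_simp
    ring
  have hGp : δ * Gp = s - e₃ := by linarith
  have hKval : K Gp = (e₃ - B * Gp - A * Gp ^ 2) / s := by
    show (e₃ - B * Gp - A * Gp ^ 2) / (δ * Gp + e₃) = _
    rw [hden]
  have hpoly : δ ^ 2 * (e₃ - B * Gp - A * Gp ^ 2) =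
      2 * e₃ * δ * (B + δ) - 2 * A * e₃ ^ 2 + (2 * A * e₃ - B * δ) * s := by
    linear_combination (-(B * δ) - A * (δ * Gp + s - e₃)) * hGp - hsA
  have hkey : (2 * A * e₃ ^ 2 - 2 * e₃ * δ * (B + δ)) < (2 * A * e₃ - δ * (B + δ)) * s := by
    have hc : 0 < 2 * A * e₃ - δ * (B + δ) := by nlinarith [mul_pos hA he₃]
    have hd : 0 < 2 * A * e₃ ^ 2 - 2 * e₃ * δ * (B + δ) := by
      nlinarith [mul_pos (mul_pos hA he₃) he₃]
    have hid : A * ((2 * A * e₃ - δ * (B + δ)) * s) ^ 2 -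
        A * (2 * A * e₃ ^ 2 - 2 * e₃ * δ * (B + δ)) ^ 2 =
        e₃ * (A * e₃ - δ * (B + δ)) * (δ * (B + δ)) ^ 2 := by
      linear_combination ((2 * A * e₃ - δ * (B + δ)) ^ 2) * hsA
    have hpos : 0 < e₃ * (A * e₃ - δ * (B + δ)) * (δ * (B + δ)) ^ 2 := by
      have h1 : 0 < A * e₃ - δ * (B + δ) := by nlinarith [mul_pos hA he₃]
      have h2 : δ * (B + δ) ≠ 0 := ne_of_lt (mul_neg_of_pos_of_neg hδ hBδ)
      positivity
    have hsq : (2 * A * e₃ ^ 2 - 2 * e₃ * δ * (B + δ)) ^ 2 <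
        ((2 * A * e₃ - δ * (B + δ)) * s) ^ 2 := by nlinarith
    nlinarith [mul_pos hc hspos]
  constructor
  · rw [hKval, lt_div_iff₀ hspos]
    nlinarith [hkey, hpoly]
  · rw [hKval, hsqrt2]
    rw [div_eq_div_iff (ne_of_gt hspos) (by positivity)]
    linear_combination (A * s) * hpoly
end

section
/- If B + δ < 0 and 1 < e₁ < e₁* := K(G̃₊), then the equation K(G) = e₁ has exactly two positive solutions G₋* < G₊*, given by G₊,₋* = (−(e₁δ + B) ± √((e₁δ + B)² − 4Ae₃(e₁ − 1)))/(2A). -/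
set_option maxHeartbeats 2000000


/-- Case I: for `1 < e₁ < e₁*` the equation `K(G) = e₁` has exactly two positive
solutions, given explicitly. -/
theorem K_two_positive_solutions (p₁ e₃ δ e₁ A B : ℝ)
    (hp₁ : 0 < p₁) (he₃ : 0 < e₃) (hδ : 0 < δ) (hδ1 : δ < 1)
    (hA : A = 1 + p₁ * δ) (hB : B = -1 + e₃ + p₁ * e₃) (hBδ : B + δ < 0) :
    let K : ℝ → ℝ := fun G => (e₃ - B * G - A * G ^ 2) / (δ * G + e₃)
    let Gtilde : ℝ := (-e₃ + Real.sqrt (e₃ ^ 2 - e₃ * δ * (B + δ) / A)) / δ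
    let C : ℝ := Real.sqrt ((e₁ * δ + B) ^ 2 - 4 * A * e₃ * (e₁ - 1))
    let Gp : ℝ := (-(e₁ * δ + B) + C) / (2 * A)
    let Gm : ℝ := (-(e₁ * δ + B) - C) / (2 * A)
    1 < e₁ → e₁ < K Gtilde →
      0 < Gm ∧ Gm < Gp ∧ K Gm = e₁ ∧ K Gp = e₁ ∧
        ∀ G : ℝ, 0 < G → K G = e₁ → G = Gm ∨ G = Gp := by
  intro K Gtilde C Gp Gm he₁ hKe₁
  have hKdef : K = fun G => (e₃ - B * G - A * G ^ 2) / (δ * G + e₃) := rfl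
  have hGtd : Gtilde = (-e₃ + Real.sqrt (e₃ ^ 2 - e₃ * δ * (B + δ) / A)) / δ := rfl
  have hCd : C = Real.sqrt ((e₁ * δ + B) ^ 2 - 4 * A * e₃ * (e₁ - 1)) := rfl
  have hGpd : Gp = (-(e₁ * δ + B) + C) / (2 * A) := rfl
  have hGmd : Gm = (-(e₁ * δ + B) - C) / (2 * A) := rfl
  clear_value K Gtilde C Gp Gm
  have hA0 : 0 < A := by nlinarith
  have hin : 0 < e₃ ^ 2 - e₃ * δ * (B + δ) / A := by
    have h1 : e₃ * δ * (B + δ) < 0 := mul_neg_of_pos_of_neg (by positivity) hBδ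
    have h2 : e₃ * δ * (B + δ) / A < 0 := div_neg_of_neg_of_pos h1 hA0
    nlinarith
  set S := Real.sqrt (e₃ ^ 2 - e₃ * δ * (B + δ) / A) with hSdef
  have hS2 : S ^ 2 = e₃ ^ 2 - e₃ * δ * (B + δ) / A := Real.sq_sqrt hin.le
  have hS0 : 0 < S := Real.sqrt_pos.mpr hin
  have hSe : e₃ < S := by
    have h1 : e₃ * δ * (B + δ) < 0 := mul_neg_of_pos_of_neg (by positivity) hBδ
    have h2 : e₃ * δ * (B + δ) / A < 0 := div_neg_of_neg_of_pos h1 hA0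
    rw [hSdef]
    exact (Real.lt_sqrt he₃.le).mpr (by linarith)
  clear_value S
  clear hSdef
  have hGt0 : 0 < Gtilde := by
    rw [hGtd]; exact div_pos (by linarith) hδ
  have hden : δ * Gtilde + e₃ = S := by
    rw [hGtd]; field_simp; ring
  have hq : A * Gtilde ^ 2 + (B + e₁ * δ) * Gtilde + e₃ * (e₁ - 1) < 0 := by
    rw [hKdef] at hKe₁
    simp only at hKe₁
    rw [hden] at hKe₁
    have h := (lt_div_iff₀ hS0).mp hKe₁
    rw [← hden] at h
    nlinarith
  have hb : B + e₁ * δ < 0 := by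
    by_contra hcon
    push_neg at hcon
    nlinarith [mul_pos hA0 (mul_pos hGt0 hGt0), mul_nonneg hcon hGt0.le,
      mul_pos he₃ (by linarith : (0:ℝ) < e₁ - 1)]
  have hD : 0 < (e₁ * δ + B) ^ 2 - 4 * A * e₃ * (e₁ - 1) := by
    nlinarith [sq_nonneg (2 * A * Gtilde + B + e₁ * δ),
      mul_pos hA0 (by linarith : 0 < -(A * Gtilde ^ 2 + (B + e₁ * δ) * Gtilde + e₃ * (e₁ - 1)))]
  have hC2 : C ^ 2 = (e₁ * δ + B) ^ 2 - 4 * A * e₃ * (e₁ - 1) := by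
    rw [hCd]; exact Real.sq_sqrt hD.le
  have hC0 : 0 < C := by rw [hCd]; exact Real.sqrt_pos.mpr hD
  have hClt : C < -(e₁ * δ + B) := by
    nlinarith [mul_pos hA0 (mul_pos he₃ (by linarith : (0:ℝ) < e₁ - 1))]
  have h2A : (0:ℝ) < 2 * A := by linarith
  have hGm0 : 0 < Gm := by
    rw [hGmd]; exact div_pos (by linarith) h2A
  have hGp0 : 0 < Gp := by
    rw [hGpd]; exact div_pos (by linarith) h2A
  have hGmGp : Gm < Gp := by
    have hdiff : Gp - Gm = C / A := by
      rw [hGpd, hGmd]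
      field_simp
      ring
    have := div_pos hC0 hA0
    linarith
  have key : ∀ G : ℝ, A * (G - Gm) * (G - Gp) =
      A * G ^ 2 + (B + e₁ * δ) * G + e₃ * (e₁ - 1) := by
    intro G
    rw [hGmd, hGpd]
    field_simp
    ring_nf
    nlinarith [hC2]
  have hsol : ∀ G : ℝ, 0 < G → (K G = e₁ ↔ A * (G - Gm) * (G - Gp) = 0) := by
    intro G hG
    have hd : 0 < δ * G + e₃ := by positivity
    rw [hKdef]
    simp only
    rw [div_eq_iff hd.ne', key]
    constructor
    · intro h; linarith
    · intro h; linarith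
  refine ⟨hGm0, hGmGp, (hsol Gm hGm0).mpr (by ring), (hsol Gp hGp0).mpr (by ring), ?_⟩
  intro G hG hKG
  have h0 : A * (G - Gm) * (G - Gp) = 0 := (hsol G hG).mp hKG
  rcases mul_eq_zero.mp h0 with h1 | h2
  · rcases mul_eq_zero.mp h1 with h3 | h4
    · exact absurd h3 hA0.ne'
    · exact Or.inl (by linarith)
  · exact Or.inr (by linarith)
end

section
/- Suppose B + δ < 0 and 1 < e₁ < e₁*, and let C = √((e₁δ + B)² − 4Ae₃(e₁ − 1)) > 0, G₊* = (−(e₁δ + B) + C)/(2A). Then K'(G₊*) < 0. -/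
/-- At the upper steady-state branch `G₊*`, the slope of `K` is negative. -/
theorem K_deriv_neg_at_upper_branch (A B δ e₃ e₁ : ℝ)
    (hA : 0 < A) (he₃ : 0 < e₃) (hδ : 0 < δ) (hδ1 : δ < 1)
    (hBδ : B + δ < 0) (he₁ : 1 < e₁) :
    let C : ℝ := Real.sqrt ((e₁ * δ + B) ^ 2 - 4 * A * e₃ * (e₁ - 1))
    let Gp : ℝ := (-(e₁ * δ + B) + C) / (2 * A)
    let K : ℝ → ℝ := fun G => (e₃ - B * G - A * G ^ 2) / (δ * G + e₃)
    0 < C → C < -(e₁ * δ) - B → (e₁ * δ + B) ^ 2 > 4 * A * e₃ * (e₁ - 1) →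
      deriv K Gp < 0 := by
  intro C Gp K hC hClt hdisc
  have hCdef : C = Real.sqrt ((e₁ * δ + B) ^ 2 - 4 * A * e₃ * (e₁ - 1)) := rfl
  have hGpdef : Gp = (-(e₁ * δ + B) + C) / (2 * A) := rfl
  have hCsq : C ^ 2 = (e₁ * δ + B) ^ 2 - 4 * A * e₃ * (e₁ - 1) := by
    rw [hCdef, Real.sq_sqrt (by linarith)]
  have hGpos : 0 < Gp := by
    rw [hGpdef]
    apply div_pos _ (by linarith)
    linarith
  have hden : 0 < δ * Gp + e₃ := by positivity
  have hnum : HasDerivAt (fun G : ℝ => e₃ - B * G - A * G ^ 2) (-B - 2 * A * Gp) Gp := by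
    have h := ((hasDerivAt_const Gp e₃).sub ((hasDerivAt_id Gp).const_mul B)).sub
      ((hasDerivAt_pow 2 Gp).const_mul A)
    refine h.congr_deriv ?_
    push_cast; ring
  have hd : HasDerivAt (fun G : ℝ => δ * G + e₃) δ Gp := by
    have h := ((hasDerivAt_id Gp).const_mul δ).add_const e₃
    simpa using h
  have hK : HasDerivAt K (((-B - 2 * A * Gp) * (δ * Gp + e₃) -
      (e₃ - B * Gp - A * Gp ^ 2) * δ) / (δ * Gp + e₃) ^ 2) Gp := hnum.div hd hden.ne'
  rw [hK.deriv]
  apply div_neg_of_neg_of_pos _ (by positivity)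
  -- key algebraic identity
  have hGp2 : Gp * (2 * A) = -(e₁ * δ + B) + C := by
    rw [hGpdef]; field_simp
  have key : 2 * A * ((-B - 2 * A * Gp) * (δ * Gp + e₃) - (e₃ - B * Gp - A * Gp ^ 2) * δ)
      = -(C * (δ * C + 2 * A * e₃ + δ * (-(e₁ * δ) - B))) := by
    linear_combination (-(δ/2) * (Gp * (2 * A)) - (δ/2) * (-(e₁ * δ + B) + C) - 2 * A * e₃) * hGp2
      + (δ/2) * hCsq
  have hpos : 0 < C * (δ * C + 2 * A * e₃ + δ * (-(e₁ * δ) - B)) := by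
    apply mul_pos hC
    have : 0 < -(e₁ * δ) - B := lt_trans hC hClt
    positivity
  nlinarith [key, hpos, hA]
end

section
/- Suppose B + δ < 0 and 1 < e₁ < e₁*, and let C = √((e₁δ + B)² − 4Ae₃(e₁ − 1)) > 0, G₋* = (−(e₁δ + B) − C)/(2A). Then K'(G₋*) > 0. -/
/-- At the lower steady-state branch `G₋*`, the slope of `K` is positive. -/
theorem K_deriv_pos_at_lower_branch (A B δ e₃ e₁ : ℝ)
    (hA : 0 < A) (he₃ : 0 < e₃) (hδ : 0 < δ) (hδ1 : δ < 1)
    (hBδ : B + δ < 0) (he₁ : 1 < e₁) :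
    let C : ℝ := Real.sqrt ((e₁ * δ + B) ^ 2 - 4 * A * e₃ * (e₁ - 1))
    let Gm : ℝ := (-(e₁ * δ + B) - C) / (2 * A)
    let K : ℝ → ℝ := fun G => (e₃ - B * G - A * G ^ 2) / (δ * G + e₃)
    0 < C → C < -(e₁ * δ) - B → (e₁ * δ + B) ^ 2 > 4 * A * e₃ * (e₁ - 1) →
      0 < deriv K Gm := by
  intro C Gm K hC hCL hdisc
  have hC2 : C ^ 2 = (e₁ * δ + B) ^ 2 - 4 * A * e₃ * (e₁ - 1) :=
    Real.sq_sqrt (by linarith)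
  have hGm : 2 * A * Gm = -(e₁ * δ + B) - C := by
    show 2 * A * ((-(e₁ * δ + B) - C) / (2 * A)) = _
    field_simp
  have hGmpos : 0 < Gm := by
    have : 0 < -(e₁ * δ + B) - C := by linarith [hCL]
    exact div_pos this (by linarith)
  have hdpos : 0 < δ * Gm + e₃ := by positivity
  have hd : δ * Gm + e₃ ≠ 0 := ne_of_gt hdpos
  have hf : HasDerivAt (fun G => e₃ - B * G - A * G ^ 2) (-B - 2 * A * Gm) Gm := by
    have h2 := ((hasDerivAt_pow 2 Gm).const_mul A)
    have h1 := (hasDerivAt_id Gm).const_mul B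
    have h := ((hasDerivAt_const Gm e₃).sub h1).sub h2
    convert h using 1
    · rfl
    · rfl
    · funext G; simp
    · simp; ring
  have hg : HasDerivAt (fun G => δ * G + e₃) δ Gm := by
    have h := ((hasDerivAt_id Gm).const_mul δ).add_const e₃
    simpa using h
  have hK := hf.div hg hd
  have hderiv : deriv K Gm =
      ((-B - 2 * A * Gm) * (δ * Gm + e₃) - (e₃ - B * Gm - A * Gm ^ 2) * δ) /
        (δ * Gm + e₃) ^ 2 := hK.deriv
  rw [hderiv]
  apply div_pos _ (by positivity)
  have key : 4 * A * ((-B - 2 * A * Gm) * (δ * Gm + e₃) - (e₃ - B * Gm - A * Gm ^ 2) * δ)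
      = 2 * δ * C * (-(e₁ * δ + B) - C) + 4 * A * e₃ * C := by
    linear_combination (-(δ * (2 * A * Gm + (-(e₁ * δ + B) - C))) - 4 * A * e₃) * hGm + δ * hC2
  have h1 : 0 < 2 * δ * C * (-(e₁ * δ + B) - C) + 4 * A * e₃ * C := by
    have := mul_pos (mul_pos (mul_pos (by linarith : (0:ℝ) < 2) hδ) hC)
      (show 0 < -(e₁ * δ + B) - C by linarith)
    nlinarith [mul_pos (mul_pos (mul_pos (by norm_num : (0:ℝ) < 4) hA) he₃) hC]
  nlinarith [key, h1, hA]
end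

section
/- At a positive coexistence steady state (G*, S*) with S* = 1/L(G*) and G* = F(S*), the determinant of the Jacobian of the ODE system satisfies Det J = φG*·(−K'(G*)L(G*)²)/(1 + L(G*)p₁). Hence Det J > 0 if and only if K'(G*) < 0. -/
/-- Determinant of the Jacobian at a positive coexistence steady state in terms of
`K'(G*)`; positivity of the determinant is equivalent to `K'(G*) < 0`. -/
theorem det_jacobian_coexistence (e₁ p₁ e₃ φ δ G : ℝ)
    (he₁ : 0 < e₁) (hp₁ : 0 < p₁) (he₃ : 0 < e₃) (hφ : 0 < φ)
    (hδ : 0 < δ) (hδ1 : δ < 1) (hG : 0 < G) :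
    let F : ℝ → ℝ := fun S => (S - e₁) / (S + p₁)
    let L : ℝ → ℝ := fun G => (δ * G + e₃) / (G + e₃)
    let K : ℝ → ℝ := fun G => (1 - G) / L G - p₁ * G
    let detJ : ℝ := (-G) * (-φ * L G) -
      (G * deriv F (1 / L G)) * (-φ * deriv L G / L G)
    F (1 / L G) = G →
      detJ = φ * G * (-(deriv K G) * (L G) ^ 2 / (1 + L G * p₁)) ∧
        (0 < detJ ↔ deriv K G < 0) := by
  intro F L K detJ hF
  have hA : (0:ℝ) < G + e₃ := by linarith
  have hB : (0:ℝ) < δ * G + e₃ := by positivity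
  have hA' : (G + e₃) ≠ 0 := ne_of_gt hA
  have hB' : (δ * G + e₃) ≠ 0 := ne_of_gt hB
  have hLG : L G = (δ * G + e₃) / (G + e₃) := rfl
  have hLpos : 0 < L G := by rw [hLG]; positivity
  have hLne : L G ≠ 0 := ne_of_gt hLpos
  -- derivative of L
  have hLd : HasDerivAt L (e₃ * (δ - 1) / (G + e₃) ^ 2) G := by
    have h1 : HasDerivAt (fun g : ℝ => δ * g + e₃) δ G := by
      simpa using ((hasDerivAt_id G).const_mul δ).add_const e₃
    have h2 : HasDerivAt (fun g : ℝ => g + e₃) 1 G := by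
      simpa using (hasDerivAt_id G).add_const e₃
    have := h1.div h2 hA'
    refine this.congr_deriv ?_
    ring
  have hLderiv : deriv L G = e₃ * (δ - 1) / (G + e₃) ^ 2 := hLd.deriv
  -- the point S* = 1/L G
  have hS : 1 / L G = (G + e₃) / (δ * G + e₃) := by
    rw [hLG, one_div, inv_div]
  have hSpos : 0 < 1 / L G := by positivity
  have hSp : (1 / L G) + p₁ ≠ 0 := by positivity
  -- derivative of F at S*
  have hFd : HasDerivAt F ((p₁ + e₁) / ((1 / L G) + p₁) ^ 2) (1 / L G) := by
    have h1 : HasDerivAt (fun s : ℝ => s - e₁) 1 (1 / L G) := by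
      simpa using (hasDerivAt_id (1 / L G)).sub_const e₁
    have h2 : HasDerivAt (fun s : ℝ => s + p₁) 1 (1 / L G) := by
      simpa using (hasDerivAt_id (1 / L G)).add_const p₁
    have := h1.div h2 hSp
    refine this.congr_deriv ?_
    ring
  have hFderiv : deriv F (1 / L G) = (p₁ + e₁) / ((1 / L G) + p₁) ^ 2 := hFd.deriv
  -- derivative of K
  have hKd : HasDerivAt K
      ((-1 * L G - (1 - G) * (e₃ * (δ - 1) / (G + e₃) ^ 2)) / (L G) ^ 2 - p₁) G := by
    have h1 : HasDerivAt (fun g : ℝ => 1 - g) (-1) G := by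
      simpa using (hasDerivAt_id G).const_sub 1
    have h2 : HasDerivAt (fun g : ℝ => p₁ * g) p₁ G := by
      simpa using (hasDerivAt_id G).const_mul p₁
    have := (h1.div hLd hLne).sub h2
    exact this
  have hKderiv : deriv K G =
      (-1 * L G - (1 - G) * (e₃ * (δ - 1) / (G + e₃) ^ 2)) / (L G) ^ 2 - p₁ :=
    hKd.deriv
  -- steady state relation: e₁
  have he : e₁ = ((G + e₃) - G * ((G + e₃) + p₁ * (δ * G + e₃))) / (δ * G + e₃) := by
    have hF' : ((G + e₃) / (δ * G + e₃) - e₁) / ((G + e₃) / (δ * G + e₃) + p₁) = G := by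
      rw [← hS]; exact hF
    have hden : (G + e₃) / (δ * G + e₃) + p₁ ≠ 0 := by positivity
    field_simp at hF' ⊢
    linarith [hF']
  have h1p : 0 < 1 + L G * p₁ := by positivity
  have hmain : detJ = φ * G * (-(deriv K G) * (L G) ^ 2 / (1 + L G * p₁)) := by
    show (-G) * (-φ * L G) - (G * deriv F (1 / L G)) * (-φ * deriv L G / L G) = _
    rw [hFderiv, hLderiv, hKderiv, hS, hLG, he]
    field_simp
    ring
  refine ⟨hmain, ?_⟩
  rw [hmain]
  have hc : 0 < φ * G * ((L G) ^ 2 / (1 + L G * p₁)) := by positivity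
  have heq : φ * G * (-deriv K G * L G ^ 2 / (1 + L G * p₁)) =
      (φ * G * ((L G) ^ 2 / (1 + L G * p₁))) * (-deriv K G) := by ring
  rw [heq, mul_pos_iff_of_pos_left hc, neg_pos]
end

section
/- At any positive coexistence steady state (G*, S*), the trace of the Jacobian, Tr J = −G* − φL(G*), is strictly negative; consequently no Hopf bifurcation (purely imaginary eigenvalue pair) can occur from a positive steady state. -/
open Matrix Polynomial

/-- The trace of the Jacobian at a positive steady state is negative, hence the Jacobian
has no nonzero purely imaginary eigenvalue (no Hopf bifurcation). -/
theorem no_hopf_bifurcation (e₁ p₁ e₃ φ δ G : ℝ)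
    (he₁ : 0 < e₁) (hp₁ : 0 < p₁) (he₃ : 0 < e₃) (hφ : 0 < φ)
    (hδ : 0 < δ) (hδ1 : δ < 1) (hG : 0 < G) :
    let F : ℝ → ℝ := fun S => (S - e₁) / (S + p₁)
    let L : ℝ → ℝ := fun G => (δ * G + e₃) / (G + e₃)
    let J : Matrix (Fin 2) (Fin 2) ℝ :=
      !![-G, G * deriv F (1 / L G);
         -φ * deriv L G / L G, -φ * L G]
    (-G - φ * L G < 0) ∧
      ∀ b : ℝ, b ≠ 0 →
        ¬((J.map (fun x : ℝ => (x : ℂ))).charpoly.IsRoot (Complex.I * b)) := by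
  intro F L J
  have hLpos : 0 < L G := div_pos (by positivity) (by positivity)
  have htr : -G - φ * L G < 0 := by nlinarith [mul_pos hφ hLpos]
  refine ⟨htr, ?_⟩
  intro b hb hroot
  set M := J.map (fun x : ℝ => (x : ℂ)) with hM
  have hcp : M.charpoly = X ^ 2 - C M.trace * X + C M.det := by
    rw [Matrix.charpoly, Matrix.det_fin_two, Matrix.charmatrix_apply_eq,
      Matrix.charmatrix_apply_eq, Matrix.charmatrix_apply_ne _ _ _ (by decide),
      Matrix.charmatrix_apply_ne _ _ _ (by decide), Matrix.trace_fin_two, Matrix.det_fin_two]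
    simp only [map_add, map_sub, _root_.map_mul]
    ring
  have heval : (Complex.I * b) ^ 2 - M.trace * (Complex.I * b) + M.det = 0 := by
    have := hroot
    rw [Polynomial.IsRoot, hcp] at this
    simpa using this
  have htrM : M.trace = ((-G - φ * L G : ℝ) : ℂ) := by
    simp [hM, Matrix.trace_fin_two, J]
    push_cast
    ring
  have hdetM : ∃ d : ℝ, M.det = (d : ℂ) := by
    refine ⟨J.det, ?_⟩
    simp [hM, Matrix.det_fin_two, J]
  obtain ⟨d, hd⟩ := hdetM
  rw [htrM, hd] at heval
  have him := congrArg Complex.im heval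
  have h2 : ((Complex.I * (b:ℂ)) ^ 2).im = 0 := by
    simp [mul_pow, Complex.I_sq, ← Complex.ofReal_pow]
  rw [Complex.add_im, Complex.sub_im, h2, Complex.ofReal_im] at him
  simp [Complex.mul_im] at him
  rcases him with h | h
  · exact absurd h (ne_of_lt htr)
  · exact hb h
end
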